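/- Let k be a field of prime characteristic p, L_1, ..., L_n finite extensions of k such that the image of k under the diagonal embedding into L_1 × ... × L_n is p-th root closed (i.e., any c in the product with c^p in the diagonal image lies in the diagonal image), and V_i DVRs with residue fields L_i. Then the glued ring S = { (v_1,...,v_n) : ∃ α ∈ k, v_i ≡ α mod m_i } has the property: for every prime q and every v in ∏ V_i with v^q ∈ S and q·v ∈ S, one has v ∈ S. -/

import Mathlib

/-- If the diagonal image of `k` in `L_1 × ... × L_n` is `p`-th root closed, then the
glued ring `S` (tuples in `∏ V_i` congruent to a common element of `k` modulo the
maximal ideals) is weakly normal relative to `∏ V_i`: for every prime `q` and every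
`v ∈ ∏ V_i` with `v^q ∈ S` and `q·v ∈ S`, one has `v ∈ S`. -/
theorem stmt19 {k : Type*} [Field k] (p : ℕ) [Fact p.Prime] [CharP k p]
    {n : ℕ} (L : Fin n → Type*) [∀ i, Field (L i)] [∀ i, Algebra k (L i)]
    [∀ i, FiniteDimensional k (L i)]
    (V : Fin n → Type*) [∀ i, CommRing (V i)] [∀ i, IsDomain (V i)]
    [∀ i, IsDiscreteValuationRing (V i)]
    (e : ∀ i, IsLocalRing.ResidueField (V i) ≃+* L i)
    (hroot : ∀ c : Π i, L i, (∃ a : k, ∀ i, c i ^ p = algebraMap k (L i) a) →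
      ∃ b : k, ∀ i, c i = algebraMap k (L i) b)
    (S : Subring (Π i, V i))
    (hS : ∀ v : Π i, V i, v ∈ S ↔ ∃ α : k, ∀ i,
      e i (IsLocalRing.residue (V i) (v i)) = algebraMap k (L i) α)
    (q : ℕ) (hq : q.Prime) (v : Π i, V i)
    (h1 : v ^ q ∈ S) (h2 : (q : Π i, V i) * v ∈ S) :
    v ∈ S := by
  set f : ∀ i, V i →+* L i := fun i => (e i).toRingHom.comp (IsLocalRing.residue (V i))
    with hf
  have hfc : ∀ (w : Π i, V i) (i : Fin n),
      e i (IsLocalRing.residue (V i) (w i)) = f i (w i) := fun _ _ => rfl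
  rw [hS] at h1 h2 ⊢
  obtain ⟨α, hα⟩ := h1
  obtain ⟨β, hβ⟩ := h2
  by_cases hpq : q = p
  · subst hpq
    obtain ⟨b, hb⟩ := hroot (fun i => f i (v i)) ⟨α, fun i => by
      have := hα i
      rw [hfc] at this
      simpa [map_pow] using this⟩
    exact ⟨b, fun i => by rw [hfc]; exact hb i⟩
  · have hq0 : (q : k) ≠ 0 := by
      have : ¬ (p ∣ q) := by
        intro h
        exact hpq ((Nat.prime_dvd_prime_iff_eq (Fact.out) hq).mp h).symm
      exact fun h => this ((CharP.cast_eq_zero_iff k p q).mp h)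
    refine ⟨β / q, fun i => ?_⟩
    have hβi := hβ i
    rw [hfc] at hβi
    have hq0' : (q : L i) ≠ 0 := by
      have : (q : L i) = algebraMap k (L i) (q : k) := by
        simp [map_natCast]
      rw [this]
      exact fun h => hq0 ((algebraMap k (L i)).injective (by rw [h, map_zero]))
    have : ((q : Π i', V i') * v) i = (q : V i) * v i := by simp
    rw [this, map_mul, map_natCast] at hβi
    rw [hfc]
    field_simp
    rw [map_div₀, map_natCast, eq_div_iff hq0', mul_comm]
    exact hβi
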